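/- arXiv:1712.00637 — 8 statements merged into one kernel-verified Lean document; each statement's English description precedes it below -/
import Mathlib

section
/- For every ρ ∈ M₃(ℂ), one has Trace(ρ·𝓛(x)) = 0 for all x ∈ M₃(ℂ) if and only if ρ lies in the complex linear span of E₁₁ and E₂₂. (In other words, the invariant functionals of the quantum Markov semigroup generated by 𝓛 are exactly those of the form a·E₁₁ + b·E₂₂ with a, b ∈ ℂ.) -/
open Matrix

noncomputable section

/-- The standard matrix units `E i j` of `M₃(ℂ)` (with indices `0,1,2` for `1,2,3`). -/
def E (i j : Fin 3) : Matrix (Fin 3) (Fin 3) ℂ := Matrix.single i j 1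

/-- The GKSL generator `𝓛(x) = iω[E₁₁,x] − ½(E₃₃x − 2E₃₂xE₂₃ + xE₃₃)`. -/
def gen (ω : ℝ) (x : Matrix (Fin 3) (Fin 3) ℂ) : Matrix (Fin 3) (Fin 3) ℂ :=
  (Complex.I * (ω : ℂ)) • (E 0 0 * x - x * E 0 0)
    - (1 / 2 : ℂ) • (E 2 2 * x - 2 • (E 2 1 * x * E 1 2) + x * E 2 2)

theorem invariant_functionals_iff (ω : ℝ) (hω : ω ≠ 0) (ρ : Matrix (Fin 3) (Fin 3) ℂ) :
    (∀ x : Matrix (Fin 3) (Fin 3) ℂ, (ρ * gen ω x).trace = 0) ↔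
      ∃ a b : ℂ, ρ = a • E 0 0 + b • E 1 1 := by
  constructor
  · intro h
    have h1 := h (E 1 0); have h2 := h (E 0 1); have h3 := h (E 2 0)
    have h4 := h (E 0 2); have h5 := h (E 2 1); have h6 := h (E 1 2)
    have h7 := h (E 1 1)
    simp [gen, E, trace, Matrix.mul_apply, Fin.sum_univ_three, Matrix.single,
      Matrix.smul_apply, Matrix.sub_apply, Matrix.add_apply, two_smul] at h1 h2 h3 h4 h5 h6 h7
    have k3 : (-(Complex.I * (ω:ℂ)) - 2⁻¹ : ℂ) ≠ 0 := by
      intro hc; have := congrArg Complex.re hc; simp at this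
    have k4 : (Complex.I * (ω:ℂ) - 2⁻¹ : ℂ) ≠ 0 := by
      intro hc; have := congrArg Complex.re hc; simp at this
    have e1 : ρ 0 1 = 0 := h1.resolve_right hω
    have e2 : ρ 1 0 = 0 := h2.resolve_right hω
    have e3 : ρ 0 2 = 0 := h3.resolve_right k3
    have e4 : ρ 2 0 = 0 := h4.resolve_right k4
    refine ⟨ρ 0 0, ρ 1 1, ?_⟩
    ext i j
    fin_cases i <;> fin_cases j <;>
      simp [E, Matrix.single, e1, e2, e3, e4, h5, h6, h7]
  · rintro ⟨a, b, rfl⟩ x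
    simp [gen, E, trace, Matrix.mul_apply, Fin.sum_univ_three, Matrix.single,
      Matrix.smul_apply, Matrix.sub_apply, Matrix.add_apply]

end
end

section
/- If ρ ∈ M₃(ℂ) is positive semidefinite with Trace ρ = 1 and Trace(ρ·𝓛(x)) = 0 for all x ∈ M₃(ℂ), then ρ·e₃ = 0, where e₃ is the third standard basis vector of ℂ³; in particular ρ is not positive definite, so the semigroup generated by 𝓛 has no faithful invariant state. -/
open Matrix
open scoped ComplexOrder

noncomputable section

theorem no_faithful_invariant_state (ω : ℝ) (hω : ω ≠ 0) (ρ : Matrix (Fin 3) (Fin 3) ℂ)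
    (hpos : ρ.PosSemidef) (htr : ρ.trace = 1)
    (hinv : ∀ x : Matrix (Fin 3) (Fin 3) ℂ, (ρ * gen ω x).trace = 0) :
    ρ *ᵥ (Pi.single (2 : Fin 3) (1 : ℂ)) = 0 ∧ ¬ ρ.PosDef := by
  have h22 : ρ 2 2 = 0 := by
    have h := hinv (E 1 1)
    simp [gen, E, Matrix.trace, Matrix.mul_apply, Fin.sum_univ_succ,
      Matrix.single, Matrix.diag, two_smul] at h
    linear_combination h
  obtain ⟨B, hB⟩ : ∃ B : Matrix (Fin 3) (Fin 3) ℂ, ρ = Bᴴ * B := by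
    open scoped MatrixOrder in exact CStarAlgebra.nonneg_iff_eq_star_mul_self.mp hpos.nonneg
  have hsum : ∑ k, Complex.normSq (B k 2) = 0 := by
    have : (Bᴴ * B) 2 2 = 0 := by rw [← hB]; exact h22
    rw [Matrix.mul_apply] at this
    have := congrArg Complex.re this
    simpa [Matrix.conjTranspose_apply, Complex.normSq, Complex.mul_re] using this
  have hcol : ∀ k, B k 2 = 0 := by
    intro k
    have hk : Complex.normSq (B k 2) = 0 := by
      have := (Finset.sum_eq_zero_iff_of_nonneg
        (fun i _ => Complex.normSq_nonneg (B i 2))).mp hsum k (Finset.mem_univ k)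
      exact this
    exact Complex.normSq_eq_zero.mp hk
  have hmul : ρ *ᵥ Pi.single (2 : Fin 3) (1 : ℂ) = 0 := by
    have hBv : B *ᵥ Pi.single (2 : Fin 3) (1 : ℂ) = 0 := by
      ext i
      simp [Matrix.mulVec_single, hcol]
    rw [hB, ← Matrix.mulVec_mulVec, hBv, Matrix.mulVec_zero]
  refine ⟨hmul, fun hpd => ?_⟩
  have hne : (Pi.single (2 : Fin 3) (1 : ℂ)) ≠ (0 : Fin 3 → ℂ) := by
    intro h; have := congrFun h 2; simp at this
  have := hpd.dotProduct_mulVec_pos hne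
  rw [hmul] at this
  simp at this

end
end

section
/- For x ∈ M₃(ℂ), one has 𝓛(x) = 0 if and only if there exist a, b ∈ ℂ with x = a·E₁₁ + b·(E₂₂ + E₃₃). -/
open Matrix

noncomputable section

theorem kernel_of_generator (ω : ℝ) (hω : ω ≠ 0) (x : Matrix (Fin 3) (Fin 3) ℂ) :
    gen ω x = 0 ↔ ∃ a b : ℂ, x = a • E 0 0 + b • (E 1 1 + E 2 2) := by
  constructor
  · intro h
    have h2 : ∀ i j, gen ω x i j = 0 := by intro i j; rw [h]; rfl
    have e01 := h2 0 1
    have e02 := h2 0 2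
    have e10 := h2 1 0
    have e12 := h2 1 2
    have e20 := h2 2 0
    have e21 := h2 2 1
    have e22 := h2 2 2
    simp [gen, E, Matrix.smul_apply, Matrix.mul_apply, Fin.sum_univ_three,
      Matrix.single, smul_eq_mul, two_smul] at e01 e02 e10 e12 e20 e21 e22
    have h01 : x 0 1 = 0 := e01.resolve_left hω
    have h10 : x 1 0 = 0 := e10.resolve_left hω
    have h02 : x 0 2 = 0 := by
      have hm : (Complex.I * (ω : ℂ) - 2⁻¹) * x 0 2 = 0 := by linear_combination e02
      rcases mul_eq_zero.mp hm with hc | hc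
      · exfalso
        have := congrArg Complex.re hc
        simp [Complex.mul_re] at this
      · exact hc
    have h20 : x 2 0 = 0 := by
      have hm : (Complex.I * (ω : ℂ) + 2⁻¹) * x 2 0 = 0 := by linear_combination -e20
      rcases mul_eq_zero.mp hm with hc | hc
      · exfalso
        have := congrArg Complex.re hc
        simp [Complex.mul_re] at this
      · exact hc
    have h22 : x 2 2 = x 1 1 := by linear_combination -e22
    refine ⟨x 0 0, x 1 1, ?_⟩
    ext i j
    fin_cases i <;> fin_cases j <;>
      simp [E, Matrix.single, h01, h10, h02, h20, h22, e12, e21]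
  · rintro ⟨a, b, rfl⟩
    ext i j
    fin_cases i <;> fin_cases j <;>
      simp [gen, E, Matrix.smul_apply, Matrix.mul_apply, Fin.sum_univ_three,
        Matrix.single, smul_eq_mul, two_smul]

end
end

section
/- For λ ∈ ℝ with λ ≠ 0 and x ∈ M₃(ℂ) with x ≠ 0, one has 𝓛(x) = (iλ)•x if and only if either λ = ω and x = c·E₁₂ for some c ≠ 0, or λ = −ω and x = c·E₂₁ for some c ≠ 0. -/
open Matrix

noncomputable section

set_option linter.unreachableTactic false
set_option linter.unusedTactic false

theorem nonzero_imaginary_eigenvectors (ω : ℝ) (hω : ω ≠ 0) (lam : ℝ) (hlam : lam ≠ 0)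
    (x : Matrix (Fin 3) (Fin 3) ℂ) (hx : x ≠ 0) :
    gen ω x = (Complex.I * (lam : ℂ)) • x ↔
      (lam = ω ∧ ∃ c : ℂ, c ≠ 0 ∧ x = c • E 0 1) ∨
      (lam = -ω ∧ ∃ c : ℂ, c ≠ 0 ∧ x = c • E 1 0) := by
  constructor
  · intro h
    have h' : ∀ i j, gen ω x i j = (Complex.I * (lam:ℂ)) * x i j := by
      intro i j; rw [h]; simp
    have h00 := h' 0 0
    have h01 := h' 0 1
    have h02 := h' 0 2
    have h10 := h' 1 0
    have h11 := h' 1 1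
    have h12 := h' 1 2
    have h20 := h' 2 0
    have h21 := h' 2 1
    have h22 := h' 2 2
    simp [gen, E, Matrix.mul_apply, Fin.sum_univ_three, Matrix.single, two_smul]
      at h00 h01 h02 h10 h11 h12 h20 h21 h22
    have hx00 : x 0 0 = 0 := h00.resolve_left hlam
    have hx11 : x 1 1 = 0 := h11.resolve_left hlam
    have hx02 : x 0 2 = 0 := by
      have hc : (Complex.I*(ω:ℂ) - 2⁻¹ - Complex.I*(lam:ℂ)) * x 0 2 = 0 := by
        linear_combination h02
      rcases mul_eq_zero.1 hc with hc | hc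
      · exfalso; have := congrArg Complex.re hc; simp at this
      · exact hc
    have hx12 : x 1 2 = 0 := by
      have hc : (2⁻¹ + Complex.I*(lam:ℂ)) * x 1 2 = 0 := by linear_combination -h12
      rcases mul_eq_zero.1 hc with hc | hc
      · exfalso; have := congrArg Complex.re hc; simp at this
      · exact hc
    have hx21 : x 2 1 = 0 := by
      have hc : (2⁻¹ + Complex.I*(lam:ℂ)) * x 2 1 = 0 := by linear_combination -h21
      rcases mul_eq_zero.1 hc with hc | hc
      · exfalso; have := congrArg Complex.re hc; simp at this
      · exact hc
    have hx20 : x 2 0 = 0 := by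
      have hc : (Complex.I*(ω:ℂ) + 2⁻¹ + Complex.I*(lam:ℂ)) * x 2 0 = 0 := by
        linear_combination -h20
      rcases mul_eq_zero.1 hc with hc | hc
      · exfalso; have := congrArg Complex.re hc; simp at this
      · exact hc
    have hx22 : x 2 2 = 0 := by
      have hc : (1 + Complex.I*(lam:ℂ)) * x 2 2 = 0 := by
        rw [hx11] at h22; linear_combination -h22
      rcases mul_eq_zero.1 hc with hc | hc
      · exfalso; have := congrArg Complex.re hc; simp at this
      · exact hc
    have h10' : lam = -ω ∨ x 1 0 = 0 := by
      have hc : (Complex.I * ((ω:ℂ) + (lam:ℂ))) * x 1 0 = 0 := by linear_combination -h10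
      rcases mul_eq_zero.1 hc with hc | hc
      · left
        rcases mul_eq_zero.1 hc with hc | hc
        · exact absurd hc Complex.I_ne_zero
        · have h2 : ω + lam = 0 := by exact_mod_cast hc
          linarith
      · right; exact hc
    rcases h01 with hwl | hx01
    · left
      have hx10 : x 1 0 = 0 := by
        rcases h10' with h2 | h2
        · exfalso; apply hω; linarith
        · exact h2
      refine ⟨hwl.symm, x 0 1, ?_, ?_⟩
      · intro h0
        apply hx
        ext i j
        fin_cases i <;> fin_cases j <;>
          simp [hx00, h0, hx02, hx10, hx11, hx12, hx20, hx21, hx22]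
      · ext i j
        fin_cases i <;> fin_cases j <;>
          simp [E, Matrix.single, hx00, hx02, hx10, hx11, hx12, hx20, hx21, hx22]
    · right
      have hx10 : x 1 0 ≠ 0 := by
        intro h0
        apply hx
        ext i j
        fin_cases i <;> fin_cases j <;>
          simp [hx00, hx01, hx02, h0, hx11, hx12, hx20, hx21, hx22]
      refine ⟨h10'.resolve_right hx10, x 1 0, hx10, ?_⟩
      ext i j
      fin_cases i <;> fin_cases j <;>
        simp [E, Matrix.single, hx00, hx01, hx02, hx11, hx12, hx20, hx21, hx22]
  · rintro (⟨rfl, c, hc, rfl⟩ | ⟨rfl, c, hc, rfl⟩) <;>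
    · ext i j
      fin_cases i <;> fin_cases j <;>
        simp [gen, E, Matrix.mul_apply, Fin.sum_univ_three, Matrix.single, two_smul] <;>
        ring

end
end

section
/- The complex linear span of the set {x ∈ M₃(ℂ) : there exists λ ∈ ℝ with 𝓛(x) = (iλ)•x} equals {x ∈ M₃(ℂ) : x₁₃ = x₂₃ = x₃₁ = x₃₂ = 0 and x₃₃ = x₂₂}, i.e. it equals the span of E₁₁, E₁₂, E₂₁ and E₂₂ + E₃₃. -/
open Matrix

noncomputable section

lemma cancel_of_re_ne (c x : ℂ) (h : c.re ≠ 0) (hx : c * x = 0) : x = 0 := by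
  rcases mul_eq_zero.mp hx with h0 | h0
  · exact absurd (by rw [h0]; simp) h
  · exact h0

/-- The target submodule. -/
def T : Submodule ℂ (Matrix (Fin 3) (Fin 3) ℂ) where
  carrier := {x : Matrix (Fin 3) (Fin 3) ℂ |
    x 0 2 = 0 ∧ x 1 2 = 0 ∧ x 2 0 = 0 ∧ x 2 1 = 0 ∧ x 2 2 = x 1 1}
  add_mem' := by
    rintro a b ⟨h1, h2, h3, h4, h5⟩ ⟨g1, g2, g3, g4, g5⟩
    refine ⟨?_, ?_, ?_, ?_, ?_⟩ <;> simp [Matrix.add_apply, h1, h2, h3, h4, h5, g1, g2, g3, g4, g5]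
  zero_mem' := by refine ⟨?_, ?_, ?_, ?_, ?_⟩ <;> simp
  smul_mem' := by
    rintro c a ⟨h1, h2, h3, h4, h5⟩
    refine ⟨?_, ?_, ?_, ?_, ?_⟩ <;> simp [Matrix.smul_apply, h1, h2, h3, h4, h5]

lemma gen_E00 (ω : ℝ) : gen ω (E 0 0) = (Complex.I * ((0 : ℝ) : ℂ)) • E 0 0 := by
  ext k l
  fin_cases k <;> fin_cases l <;>
    simp [gen, E, two_smul, Matrix.mul_apply, Matrix.sub_apply, Matrix.smul_apply,
      Matrix.add_apply, Matrix.single, Fin.sum_univ_three]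

lemma gen_E01 (ω : ℝ) : gen ω (E 0 1) = (Complex.I * ((ω : ℝ) : ℂ)) • E 0 1 := by
  ext k l
  fin_cases k <;> fin_cases l <;>
    simp [gen, E, two_smul, Matrix.mul_apply, Matrix.sub_apply, Matrix.smul_apply,
      Matrix.add_apply, Matrix.single, Fin.sum_univ_three]

lemma gen_E10 (ω : ℝ) : gen ω (E 1 0) = (Complex.I * ((-ω : ℝ) : ℂ)) • E 1 0 := by
  ext k l
  fin_cases k <;> fin_cases l <;>
    simp [gen, E, two_smul, Matrix.mul_apply, Matrix.sub_apply, Matrix.smul_apply,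
      Matrix.add_apply, Matrix.single, Fin.sum_univ_three]

lemma gen_E1122 (ω : ℝ) :
    gen ω (E 1 1 + E 2 2) = (Complex.I * ((0 : ℝ) : ℂ)) • (E 1 1 + E 2 2) := by
  ext k l
  fin_cases k <;> fin_cases l <;>
    simp [gen, E, two_smul, Matrix.mul_apply, Matrix.sub_apply, Matrix.smul_apply,
      Matrix.add_apply, Matrix.single, Fin.sum_univ_three]

theorem span_of_imaginary_eigenvectors (ω : ℝ) (hω : ω ≠ 0) :
    Submodule.span ℂ
        {x : Matrix (Fin 3) (Fin 3) ℂ | ∃ lam : ℝ, gen ω x = (Complex.I * (lam : ℂ)) • x} =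
      {x : Matrix (Fin 3) (Fin 3) ℂ |
        x 0 2 = 0 ∧ x 1 2 = 0 ∧ x 2 0 = 0 ∧ x 2 1 = 0 ∧ x 2 2 = x 1 1} := by
  have key : Submodule.span ℂ
      {x : Matrix (Fin 3) (Fin 3) ℂ | ∃ lam : ℝ, gen ω x = (Complex.I * (lam : ℂ)) • x} = T := by
    apply le_antisymm
    · rw [Submodule.span_le]
      rintro x ⟨lam, hx⟩
      have h := fun k l => congrFun (congrFun hx k) l
      have h02 := h 0 2
      have h12 := h 1 2
      have h20 := h 2 0
      have h21 := h 2 1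
      have h11 := h 1 1
      have h22 := h 2 2
      simp [gen, E, two_smul, Matrix.mul_apply, Matrix.sub_apply, Matrix.smul_apply,
        Matrix.add_apply, Matrix.single, Fin.sum_univ_three] at h02 h12 h20 h21 h11 h22
      have e02 : x 0 2 = 0 := by
        refine cancel_of_re_ne (Complex.I * ω - 2⁻¹ - Complex.I * lam) _ (by simp) ?_
        linear_combination h02
      have e12 : x 1 2 = 0 := by
        refine cancel_of_re_ne (-(2⁻¹ : ℂ) - Complex.I * lam) _ (by simp) ?_
        linear_combination h12
      have e20 : x 2 0 = 0 := by
        refine cancel_of_re_ne (-(Complex.I * ω) - 2⁻¹ - Complex.I * lam) _ (by simp) ?_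
        linear_combination h20
      have e21 : x 2 1 = 0 := by
        refine cancel_of_re_ne (-(2⁻¹ : ℂ) - Complex.I * lam) _ (by simp) ?_
        linear_combination h21
      have e22 : x 2 2 = x 1 1 := by
        rcases h11 with h0 | h0
        · subst h0
          have : x 2 2 - x 1 1 = 0 := by
            push_cast at h22
            linear_combination -h22
          exact sub_eq_zero.mp this
        · rw [h0]
          refine cancel_of_re_ne (Complex.I * lam + 1) _ (by simp) ?_
          linear_combination Complex.I * lam * x 2 2 - h22 + h0
      exact ⟨e02, e12, e20, e21, e22⟩
    · intro x hx
      obtain ⟨h1, h2, h3, h4, h5⟩ := hx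
      have hdecomp : x = x 0 0 • E 0 0 + x 0 1 • E 0 1 + x 1 0 • E 1 0
          + x 1 1 • (E 1 1 + E 2 2) := by
        ext k l
        fin_cases k <;> fin_cases l <;>
          simp [E, Matrix.add_apply, Matrix.smul_apply, Matrix.single, h1, h2, h3, h4, h5]
      rw [hdecomp]
      have m1 : E 0 0 ∈ Submodule.span ℂ
          {x : Matrix (Fin 3) (Fin 3) ℂ | ∃ lam : ℝ, gen ω x = (Complex.I * (lam : ℂ)) • x} :=
        Submodule.subset_span ⟨0, gen_E00 ω⟩
      have m2 : E 0 1 ∈ Submodule.span ℂ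
          {x : Matrix (Fin 3) (Fin 3) ℂ | ∃ lam : ℝ, gen ω x = (Complex.I * (lam : ℂ)) • x} :=
        Submodule.subset_span ⟨ω, gen_E01 ω⟩
      have m3 : E 1 0 ∈ Submodule.span ℂ
          {x : Matrix (Fin 3) (Fin 3) ℂ | ∃ lam : ℝ, gen ω x = (Complex.I * (lam : ℂ)) • x} :=
        Submodule.subset_span ⟨-ω, gen_E10 ω⟩
      have m4 : E 1 1 + E 2 2 ∈ Submodule.span ℂ
          {x : Matrix (Fin 3) (Fin 3) ℂ | ∃ lam : ℝ, gen ω x = (Complex.I * (lam : ℂ)) • x} :=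
        Submodule.subset_span ⟨0, gen_E1122 ω⟩
      exact Submodule.add_mem _ (Submodule.add_mem _ (Submodule.add_mem _
        (Submodule.smul_mem _ _ m1) (Submodule.smul_mem _ _ m2))
        (Submodule.smul_mem _ _ m3)) (Submodule.smul_mem _ _ m4)
  rw [key]
  rfl

end
end

section
/- Let M_r denote the complex linear span of {x ∈ M₃(ℂ) : there exists λ ∈ ℝ with 𝓛(x) = (iλ)•x}. Then E₁₂ ∈ M_r and E₂₁ ∈ M_r but the product E₂₁·E₁₂ = E₂₂ does not belong to M_r; in particular M_r is not closed under matrix multiplication, and M_r strictly contains the span of E₁₁ and E₂₂ + E₃₃. -/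
open Matrix

noncomputable section

/-- `M_r`: the span of the eigenvectors of `𝓛` with purely imaginary eigenvalue. -/
def Mr (ω : ℝ) : Submodule ℂ (Matrix (Fin 3) (Fin 3) ℂ) :=
  Submodule.span ℂ
    {x : Matrix (Fin 3) (Fin 3) ℂ | ∃ lam : ℝ, gen ω x = (Complex.I * (lam : ℂ)) • x}

/-- The linear functional `x ↦ x₁₁ - x₂₂` (indices 1,2 of `Fin 3`). -/
def phi : Matrix (Fin 3) (Fin 3) ℂ →ₗ[ℂ] ℂ where
  toFun x := x 1 1 - x 2 2
  map_add' x y := by simp [Matrix.add_apply]; ring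
  map_smul' c x := by simp [Matrix.smul_apply]; ring

lemma gen_apply_one_one (ω : ℝ) (x : Matrix (Fin 3) (Fin 3) ℂ) : gen ω x 1 1 = 0 := by
  simp [gen, E, two_smul, Matrix.mul_apply, Matrix.single, Fin.sum_univ_three]

lemma gen_apply_two_two (ω : ℝ) (x : Matrix (Fin 3) (Fin 3) ℂ) :
    gen ω x 2 2 = x 1 1 - x 2 2 := by
  simp [gen, E, two_smul, Matrix.mul_apply, Matrix.single, Fin.sum_univ_three]
  ring

lemma Mr_le_ker_phi (ω : ℝ) : Mr ω ≤ LinearMap.ker phi := by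
  rw [Mr, Submodule.span_le]
  rintro x ⟨lam, h⟩
  have h11 : (0 : ℂ) = Complex.I * (lam : ℂ) * x 1 1 := by
    have := congrFun (congrFun h 1) 1
    simpa [gen_apply_one_one, Matrix.smul_apply, smul_eq_mul] using this
  have h22 : x 1 1 - x 2 2 = Complex.I * (lam : ℂ) * x 2 2 := by
    have := congrFun (congrFun h 2) 2
    simpa [gen_apply_two_two, Matrix.smul_apply, smul_eq_mul] using this
  simp only [SetLike.mem_coe, LinearMap.mem_ker, phi, LinearMap.coe_mk, AddHom.coe_mk]
  rcases mul_eq_zero.mp h11.symm with h0 | hx11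
  · -- I * lam = 0, so lam = 0
    have hlam : (lam : ℂ) = 0 := by
      rcases mul_eq_zero.mp h0 with h' | h'
      · exact absurd h' Complex.I_ne_zero
      · exact h'
    rw [hlam] at h22
    simpa using h22
  · -- x₁₁ = 0, then (1 + I lam) x₂₂ = 0 and 1 + I lam ≠ 0
    have h' : (1 + Complex.I * (lam : ℂ)) * x 2 2 = 0 := by
      rw [hx11] at h22
      linear_combination -h22
    have hne : (1 + Complex.I * (lam : ℂ)) ≠ 0 := by
      intro hc
      have := congrArg Complex.re hc
      simp [Complex.add_re, Complex.mul_re] at this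
    have hx22 : x 2 2 = 0 := by
      rcases mul_eq_zero.mp h' with h'' | h''
      · exact absurd h'' hne
      · exact h''
    rw [hx11, hx22]; ring

theorem Mr_not_an_algebra (ω : ℝ) (hω : ω ≠ 0) :
    E 0 1 ∈ Mr ω ∧ E 1 0 ∈ Mr ω ∧ E 1 0 * E 0 1 = E 1 1 ∧ E 1 1 ∉ Mr ω ∧
      ¬ (∀ a b, a ∈ Mr ω → b ∈ Mr ω → a * b ∈ Mr ω) ∧
      Submodule.span ℂ {E 0 0, E 1 1 + E 2 2} < Mr ω := by
  have hE01 : E 0 1 ∈ Mr ω := by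
    apply Submodule.subset_span
    refine ⟨ω, ?_⟩
    ext a b
    fin_cases a <;> fin_cases b <;>
      simp [gen, E, two_smul, Matrix.mul_apply, Matrix.single, Fin.sum_univ_three]
  have hE10 : E 1 0 ∈ Mr ω := by
    apply Submodule.subset_span
    refine ⟨-ω, ?_⟩
    ext a b
    fin_cases a <;> fin_cases b <;>
      simp [gen, E, two_smul, Matrix.mul_apply, Matrix.single, Fin.sum_univ_three]
  have hE00 : E 0 0 ∈ Mr ω := by
    apply Submodule.subset_span
    refine ⟨0, ?_⟩
    ext a b
    fin_cases a <;> fin_cases b <;>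
      simp [gen, E, two_smul, Matrix.mul_apply, Matrix.single, Fin.sum_univ_three]
  have hEsum : E 1 1 + E 2 2 ∈ Mr ω := by
    apply Submodule.subset_span
    refine ⟨0, ?_⟩
    ext a b
    fin_cases a <;> fin_cases b <;>
      simp [gen, E, two_smul, Matrix.mul_apply, Matrix.single, Matrix.add_apply,
        Fin.sum_univ_three]
  have hprod : E 1 0 * E 0 1 = E 1 1 := by
    simp [E, Matrix.single_mul_single_same]
  have hE11 : E 1 1 ∉ Mr ω := by
    intro hmem
    have := Mr_le_ker_phi ω hmem
    simp [LinearMap.mem_ker, phi, E, Matrix.single] at this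
  refine ⟨hE01, hE10, hprod, hE11, ?_, ?_⟩
  · intro H
    exact hE11 (hprod ▸ H (E 1 0) (E 0 1) hE10 hE01)
  · rw [lt_iff_le_and_ne]
    constructor
    · rw [Submodule.span_le]
      rintro x (rfl | rfl)
      · exact hE00
      · exact hEsum
    · intro heq
      have hmem : E 0 1 ∈ Submodule.span ℂ {E 0 0, E 1 1 + E 2 2} := heq ▸ hE01
      rw [Submodule.mem_span_pair] at hmem
      obtain ⟨a, b, hab⟩ := hmem
      have := congrFun (congrFun hab 0) 1
      simp [E, Matrix.single, Matrix.add_apply, Matrix.smul_apply] at this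

end
end

section
/- Let X be a complex Banach space, 𝓛 : X → X a continuous linear map, φ : X → ℂ a continuous linear functional, and λ ∈ ℝ such that φ(𝓛 y) = (iλ)·φ(y) for all y ∈ X. If x ∈ X satisfies exp(t•𝓛)(x) → 0 as t → +∞ (limit along real t in the norm topology), then φ(x) = 0. -/
open Filter

/-- An eigenfunctional of the generator with purely imaginary eigenvalue annihilates every
element whose orbit under the semigroup `exp(t𝓛)` tends to `0`. -/
theorem eigenfunctional_vanishes_on_stable {X : Type*} [NormedAddCommGroup X]
    [NormedSpace ℂ X] [CompleteSpace X]
    (L : X →L[ℂ] X) (φ : X →L[ℂ] ℂ) (lam : ℝ)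
    (hφ : ∀ y : X, φ (L y) = (Complex.I * (lam : ℂ)) * φ y)
    (x : X)
    (hx : Tendsto (fun t : ℝ => (NormedSpace.exp (t • L)) x) atTop (nhds 0)) :
    φ x = 0 := by
  have hpow : ∀ (n : ℕ) (y : X), φ ((L ^ n) y) = (Complex.I * (lam : ℂ)) ^ n * φ y := by
    intro n
    induction n with
    | zero => intro y; simp
    | succ n ih =>
      intro y
      rw [pow_succ, pow_succ]
      have : (L ^ n * L) y = (L ^ n) (L y) := rfl
      rw [this, ih, hφ]
      ring
  have key : ∀ t : ℝ, φ ((NormedSpace.exp (t • L)) x)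
      = Complex.exp ((t : ℂ) * (Complex.I * (lam : ℂ))) * φ x := by
    intro t
    have hsum : Summable fun n : ℕ => ((n.factorial : ℂ))⁻¹ • (t • L) ^ n :=
      NormedSpace.expSeries_summable' (𝕂 := ℂ) (t • L)
    have hsum' : Summable fun n : ℕ => (((n.factorial : ℂ))⁻¹ • (t • L) ^ n) x := by
      exact ((ContinuousLinearMap.apply ℂ X x).hasSum hsum.hasSum).summable
    have h1 : (NormedSpace.exp (t • L)) x = ∑' n : ℕ, (((n.factorial : ℂ))⁻¹ • (t • L) ^ n) x := by
      rw [NormedSpace.exp_eq_tsum ℂ]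
      exact ((ContinuousLinearMap.apply ℂ X x).hasSum hsum.hasSum).tsum_eq.symm
    rw [h1, φ.map_tsum hsum']
    have h2 : ∀ n : ℕ, φ ((((n.factorial : ℂ))⁻¹ • (t • L) ^ n) x)
        = ((n.factorial : ℂ))⁻¹ • ((t : ℂ) * (Complex.I * (lam : ℂ))) ^ n * φ x := by
      intro n
      have : (t • L) ^ n = t ^ n • L ^ n := smul_pow t L n
      rw [this]
      simp only [ContinuousLinearMap.smul_apply, map_smul]
      rw [φ.map_smul_of_tower, hpow n x, Complex.real_smul, mul_pow]
      push_cast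
      rw [smul_eq_mul, smul_eq_mul]
      ring
    rw [tsum_congr h2]
    rw [tsum_mul_right]
    congr 1
    rw [Complex.exp_eq_exp_ℂ, NormedSpace.exp_eq_tsum ℂ]
  have hφx : Tendsto (fun t : ℝ => φ ((NormedSpace.exp (t • L)) x)) atTop (nhds 0) := by
    have := (φ.continuous.tendsto 0).comp hx
    simpa [Function.comp_def] using this
  have hnorm : Tendsto (fun t : ℝ => ‖φ ((NormedSpace.exp (t • L)) x)‖) atTop (nhds 0) := by
    simpa using hφx.norm
  have hconst : (fun t : ℝ => ‖φ ((NormedSpace.exp (t • L)) x)‖) = fun _ : ℝ => ‖φ x‖ := by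
    funext t
    rw [key t, norm_mul]
    have : ‖Complex.exp ((t : ℂ) * (Complex.I * (lam : ℂ)))‖ = 1 := by
      rw [Complex.norm_exp]
      simp [Complex.exp_eq_one_iff]
    rw [this, one_mul]
  rw [hconst] at hnorm
  have : ‖φ x‖ = 0 := tendsto_nhds_unique tendsto_const_nhds hnorm
  simpa using this
end

section
/- Let u, v ∈ ℂⁿ with K·u = κ•u and K·v = κ'•v for real numbers κ, κ'. Then the matrix η = (u vᴴ) ⊗ₖ τ (Kronecker product of the rank-one matrix u vᴴ with τ) satisfies Trace(η·𝓛(A)) = (i(κ' − κ))·Trace(η·A) for every A ∈ Matrix (Fin n × Fin m) (Fin n × Fin m) ℂ; i.e., η is a dual eigenvector of 𝓛 with purely imaginary eigenvalue i(κ' − κ). -/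
open Matrix
open scoped Kronecker ComplexOrder

noncomputable section

private lemma kron_stdBasis {n m : ℕ} (i k : Fin n) (j l : Fin m) :
    Matrix.single i k (1:ℂ) ⊗ₖ Matrix.single j l (1:ℂ)
      = Matrix.single (i,j) (k,l) (1:ℂ) := by
  ext ⟨a,b⟩ ⟨c,d⟩
  by_cases h1 : i = a <;> by_cases h2 : k = c <;> by_cases h3 : j = b <;>
    by_cases h4 : l = d <;>
      simp [Matrix.single, Matrix.kroneckerMap_apply, Prod.ext_iff, *]

/-- If `u` and `v` are eigenvectors of `K` with real eigenvalues `κ` and `κ'`, then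
`(u vᴴ) ⊗ₖ τ` is a dual eigenvector of `𝓛` with purely imaginary eigenvalue `i(κ' − κ)`. -/
theorem rank_one_tensor_tau_is_reversible
    (n m : ℕ) (hn : 1 ≤ n) (hm : 1 ≤ m)
    (K : Matrix (Fin n) (Fin n) ℂ) (hK : K.IsHermitian)
    (Lm : Matrix (Fin m) (Fin m) ℂ →ₗ[ℂ] Matrix (Fin m) (Fin m) ℂ)
    (τ : Matrix (Fin m) (Fin m) ℂ) (hτ : τ.PosDef) (hτtr : τ.trace = 1)
    (hτinv : ∀ y : Matrix (Fin m) (Fin m) ℂ, (τ * Lm y).trace = 0)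
    (𝓛 : Matrix (Fin n × Fin m) (Fin n × Fin m) ℂ →ₗ[ℂ]
      Matrix (Fin n × Fin m) (Fin n × Fin m) ℂ)
    (h𝓛 : ∀ (x : Matrix (Fin n) (Fin n) ℂ) (y : Matrix (Fin m) (Fin m) ℂ),
      𝓛 (x ⊗ₖ y) = (Complex.I • (K * x - x * K)) ⊗ₖ y + x ⊗ₖ Lm y)
    (u v : Fin n → ℂ) (κ κ' : ℝ)
    (hu : K *ᵥ u = (κ : ℂ) • u) (hv : K *ᵥ v = (κ' : ℂ) • v) :
    ∀ A : Matrix (Fin n × Fin m) (Fin n × Fin m) ℂ,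
      ((vecMulVec u (star v) ⊗ₖ τ) * 𝓛 A).trace =
        Complex.I * ((κ' : ℂ) - (κ : ℂ)) * ((vecMulVec u (star v) ⊗ₖ τ) * A).trace := by
  classical
  set η : Matrix (Fin n) (Fin n) ℂ := vecMulVec u (star v) with hη
  -- η * K = κ' • η
  have hvK : star v ᵥ* K = (κ' : ℂ) • star v := by
    have h := star_mulVec K v
    rw [hv, hK.eq] at h
    rw [← h, star_smul]
    simp [Complex.star_def]
  have hηK : η * K = (κ' : ℂ) • η := by
    rw [hη, vecMulVec_eq (Fin 1), Matrix.mul_assoc, ← replicateRow_vecMul, hvK, replicateRow_smul,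
      Matrix.mul_smul, ← vecMulVec_eq (Fin 1)]
  have hKη : K * η = (κ : ℂ) • η := by
    rw [hη, vecMulVec_eq (Fin 1), ← Matrix.mul_assoc, ← replicateCol_mulVec, hu, replicateCol_smul,
      Matrix.smul_mul, ← vecMulVec_eq (Fin 1)]
  -- key computation on elementary tensors
  have key : ∀ (x : Matrix (Fin n) (Fin n) ℂ) (y : Matrix (Fin m) (Fin m) ℂ),
      ((η ⊗ₖ τ) * 𝓛 (x ⊗ₖ y)).trace
        = Complex.I * ((κ' : ℂ) - (κ : ℂ)) * ((η ⊗ₖ τ) * (x ⊗ₖ y)).trace := by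
    intro x y
    rw [h𝓛, Matrix.mul_add, trace_add, smul_kronecker, Matrix.mul_smul, trace_smul,
      ← mul_kronecker_mul, ← mul_kronecker_mul, ← mul_kronecker_mul,
      trace_kronecker, trace_kronecker, trace_kronecker, hτinv, mul_zero, add_zero]
    have : (η * (K * x - x * K)).trace = ((κ' : ℂ) - (κ : ℂ)) * (η * x).trace := by
      rw [Matrix.mul_sub, trace_sub, ← Matrix.mul_assoc η K x, hηK, Matrix.smul_mul, trace_smul,
        ← Matrix.mul_assoc η x K, trace_mul_cycle η x K, hKη,
        Matrix.smul_mul, trace_smul]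
      simp [sub_mul, smul_eq_mul]
    rw [this]
    simp [smul_eq_mul]
    ring
  have hsingle : ∀ (p q : Fin n × Fin m) (c : ℂ),
      ((η ⊗ₖ τ) * 𝓛 (Matrix.single p q c)).trace
        = Complex.I * ((κ' : ℂ) - (κ : ℂ)) * ((η ⊗ₖ τ) * Matrix.single p q c).trace := by
    rintro ⟨p1, p2⟩ ⟨q1, q2⟩ c
    have hc : Matrix.single ((p1, p2) : Fin n × Fin m) (q1, q2) c
        = c • (Matrix.single p1 q1 (1:ℂ) ⊗ₖ Matrix.single p2 q2 (1:ℂ)) := by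
      rw [kron_stdBasis, smul_single, smul_eq_mul, mul_one]
    rw [hc, _root_.map_smul, Matrix.mul_smul, trace_smul, Matrix.mul_smul, trace_smul, key,
      smul_eq_mul, smul_eq_mul]
    ring
  intro A
  rw [matrix_eq_sum_single A]
  simp only [map_sum, Matrix.mul_sum, trace_sum, Finset.mul_sum]
  exact Finset.sum_congr rfl fun p _ => Finset.sum_congr rfl fun q _ => hsingle p q _

end
end
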